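/- arXiv:1710.11150 — 4 statements merged into one kernel-verified Lean document; each statement's English description precedes it below -/
import Mathlib

section
/- Fix an integer d ≥ 1 and λ > 0. Let K be an Exponential random variable with rate 1 and let W be an independent random variable whose distribution is the uniform mixture (1/d)·∑_{i=1}^d Gamma(i,λ). Then for every u with 0 < u < 1, the moment generating function of Z := K − W satisfies E[e^{uZ}] = (λ/(d·u·(1−u)))·[1 − (λ/(λ+u))^d]. -/
open MeasureTheory ProbabilityTheory Real Set
open scoped ENNReal NNReal

lemma aux_integrableOn {a b : ℝ} (ha : 0 < a) (hb : 0 < b) :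
    IntegrableOn (fun x : ℝ => x ^ (a - 1) * exp (-(b * x))) (Ioi 0) := by
  have h0 : IntegrableOn (fun x : ℝ => exp (-(b * x)) * (b * x) ^ (a - 1)) (Ioi 0) := by
    have := (integrableOn_Ioi_comp_mul_left_iff
      (fun x : ℝ => exp (-x) * x ^ (a - 1)) 0 hb).2 ?_
    · simpa using this
    · simpa using Real.GammaIntegral_convergent ha
  have h1 := h0.const_mul (b ^ (1 - a))
  refine IntegrableOn.congr_fun h1 (fun x hx => ?_) measurableSet_Ioi
  have hx0 : (0:ℝ) < x := hx
  rw [Real.mul_rpow hb.le hx0.le]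
  have hbb : b ^ (1-a) * b ^ (a-1) = 1 := by rw [← Real.rpow_add hb]; norm_num
  linear_combination (rexp (-(b * x)) * x ^ (a - 1)) * hbb

lemma aux_gamma_mgf {a r t : ℝ} (ha : 0 < a) (hr : 0 < r) (ht : t < r) :
    ∫ x, exp (t * x) ∂(gammaMeasure a r) = (r / (r - t)) ^ a := by
  have hrt : 0 < r - t := by linarith
  have hmeas : Measurable fun x => (gammaPDFReal a r x).toNNReal :=
    (measurable_gammaPDFReal a r).real_toNNReal
  have hden : gammaPDF a r = fun x => ((gammaPDFReal a r x).toNNReal : ℝ≥0∞) := rfl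
  rw [gammaMeasure, hden, integral_withDensity_eq_integral_smul hmeas]
  have h1 : ∫ x, (gammaPDFReal a r x).toNNReal • exp (t * x)
      = ∫ x, gammaPDFReal a r x * exp (t * x) := by
    congr 1
    funext x
    rw [NNReal.smul_def, Real.coe_toNNReal _ (gammaPDFReal_nonneg ha hr x), smul_eq_mul]
  rw [h1]
  have h2 : ∫ x, gammaPDFReal a r x * exp (t * x)
      = ∫ x in Ici (0:ℝ), gammaPDFReal a r x * exp (t * x) := by
    symm
    apply setIntegral_eq_integral_of_forall_compl_eq_zero
    intro x hx
    have hx0 : x < 0 := by simpa using hx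
    rw [gammaPDFReal, if_neg (not_le.mpr hx0), zero_mul]
  have h3 : ∀ x ∈ Ioi (0:ℝ), gammaPDFReal a r x * exp (t * x)
      = (r ^ a / Real.Gamma a) * (x ^ (a-1) * exp (-((r - t) * x))) := by
    intro x hx
    have hx0 : (0:ℝ) ≤ x := le_of_lt hx
    rw [gammaPDFReal, if_pos hx0, mul_assoc, mul_assoc, ← Real.exp_add,
      show -(r * x) + t * x = -((r - t) * x) by ring]
  rw [h2, integral_Ici_eq_integral_Ioi, setIntegral_congr_fun measurableSet_Ioi h3,
    integral_const_mul, integral_rpow_mul_exp_neg_mul_Ioi ha hrt]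
  have hG : Real.Gamma a ≠ 0 := (Real.Gamma_pos_of_pos ha).ne'
  have hm : r ^ a * (1/(r-t)) ^ a = (r/(r-t)) ^ a := by
    rw [← Real.mul_rpow hr.le (by positivity), mul_one_div]
  field_simp
  linear_combination hm

lemma aux_integrable {a r t : ℝ} (ha : 0 < a) (hr : 0 < r) (ht : t < r) :
    Integrable (fun x => exp (t * x)) (gammaMeasure a r) := by
  have hrt : 0 < r - t := by linarith
  have hmeas : Measurable fun x => (gammaPDFReal a r x).toNNReal :=
    (measurable_gammaPDFReal a r).real_toNNReal
  have hden : gammaPDF a r = fun x => ((gammaPDFReal a r x).toNNReal : ℝ≥0∞) := rfl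
  rw [gammaMeasure, hden,
    integrable_withDensity_iff_integrable_smul hmeas]
  have h1 : (fun x => (gammaPDFReal a r x).toNNReal • exp (t * x))
      = fun x => gammaPDFReal a r x * exp (t * x) := by
    funext x
    rw [NNReal.smul_def, Real.coe_toNNReal _ (gammaPDFReal_nonneg ha hr x), smul_eq_mul]
  rw [h1]
  have h2 : (fun x => gammaPDFReal a r x * exp (t * x))
      = (Ici (0:ℝ)).indicator (fun x => gammaPDFReal a r x * exp (t * x)) := by
    funext x
    by_cases hx : (0:ℝ) ≤ x
    · rw [Set.indicator_apply, if_pos (mem_Ici.2 hx)]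
    · rw [Set.indicator_apply, if_neg (by simpa using hx), gammaPDFReal, if_neg hx, zero_mul]
  rw [h2, integrable_indicator_iff measurableSet_Ici,
    integrableOn_Ici_iff_integrableOn_Ioi]
  have h3 := (aux_integrableOn ha hrt).const_mul (r ^ a / Real.Gamma a)
  refine IntegrableOn.congr_fun h3 (fun x hx => ?_) measurableSet_Ioi
  have hx0 : (0:ℝ) ≤ x := le_of_lt hx
  rw [gammaPDFReal, if_pos hx0, mul_assoc, mul_assoc, ← Real.exp_add,
    show -(r * x) + t * x = -((r - t) * x) by ring]

/-- If `K` is Exponential with rate 1 and `W`, independent of `K`, has the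
uniform mixture distribution `(1/d)·∑_{i=1}^d Gamma(i,λ)`, then for `0 < u < 1` the moment
generating function of `Z := K − W` satisfies
`E[e^{uZ}] = (λ/(d·u·(1−u)))·[1 − (λ/(λ+u))^d]`. -/
theorem mgf_K_sub_W
    {Ω : Type*} [MeasureSpace Ω] [IsProbabilityMeasure (ℙ : Measure Ω)]
    (d : ℕ) (hd : 1 ≤ d) (l : ℝ) (hl : 0 < l)
    (K W : Ω → ℝ) (hK : Measurable K) (hW : Measurable W)
    (hindep : IndepFun K W ℙ)
    (hKlaw : Measure.map K ℙ = expMeasure 1)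
    (hWlaw : Measure.map W ℙ
      = (d : ℝ≥0∞)⁻¹ • (∑ i ∈ Finset.Icc 1 d, gammaMeasure (i : ℝ) l)) :
    ∀ u : ℝ, 0 < u → u < 1 →
      ∫ ω, Real.exp (u * (K ω - W ω)) ∂ℙ
        = (l / (d * u * (1 - u))) * (1 - (l / (l + u)) ^ d) := by
  intro u hu hu1
  have hlu : (0:ℝ) < l + u := by linarith
  have hnW : IndepFun K (-W) ℙ := hindep.neg_right
  have hmgf : mgf (K + -W) ℙ u = mgf K ℙ u * mgf (-W) ℙ u :=
    hnW.mgf_add' hK.aestronglyMeasurable hW.neg.aestronglyMeasurable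
  have hLHS : ∫ ω, Real.exp (u * (K ω - W ω)) ∂ℙ = mgf (K + -W) ℙ u := by
    simp only [mgf, Pi.add_apply, Pi.neg_apply, sub_eq_add_neg]
  have hcont : ∀ t : ℝ, Continuous fun x : ℝ => exp (t * x) := fun t => by fun_prop
  have hmK : mgf K ℙ u = 1 / (1 - u) := by
    have h1 : mgf K ℙ u = ∫ x, exp (u * x) ∂(Measure.map K ℙ) :=
      (integral_map hK.aemeasurable (hcont u).aestronglyMeasurable).symm
    rw [h1, hKlaw, show expMeasure 1 = gammaMeasure 1 1 from rfl,
      aux_gamma_mgf one_pos one_pos hu1, Real.rpow_one]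
  have hmW : mgf (-W) ℙ u
      = (d:ℝ)⁻¹ * ∑ i ∈ Finset.Icc 1 d, (l/(l+u))^i := by
    rw [mgf_neg, mgf]
    have h1 : ∫ ω, exp (-u * W ω) ∂ℙ = ∫ x, exp (-u * x) ∂(Measure.map W ℙ) :=
      (integral_map hW.aemeasurable (hcont (-u)).aestronglyMeasurable).symm
    have hint : ∀ i ∈ Finset.Icc 1 d,
        Integrable (fun x => exp (-u * x)) (gammaMeasure (i:ℝ) l) := by
      intro i hi
      have hi1 : (1:ℝ) ≤ (i:ℝ) := by exact_mod_cast (Finset.mem_Icc.mp hi).1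
      exact aux_integrable (by linarith) hl (by linarith)
    rw [h1, hWlaw, integral_smul_measure, integral_finset_sum_measure hint]
    congr 1
    · simp [ENNReal.toReal_inv]
    · refine Finset.sum_congr rfl (fun i hi => ?_)
      have hi1 : (1:ℝ) ≤ (i:ℝ) := by exact_mod_cast (Finset.mem_Icc.mp hi).1
      rw [aux_gamma_mgf (by linarith) hl (by linarith),
        show l - -u = l + u by ring, Real.rpow_natCast]
  rw [hLHS, hmgf, hmK, hmW]
  have hx1 : l / (l + u) ≠ 1 :=
    ne_of_lt ((div_lt_one hlu).2 (by linarith))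
  have hsum : ∑ i ∈ Finset.Icc 1 d, (l/(l+u))^i
      = ((l/(l+u))^(d+1) - (l/(l+u))^1) / (l/(l+u) - 1) := by
    rw [show Finset.Icc 1 d = Finset.Ico 1 (d+1) by rw [Finset.Ico_add_one_right_eq_Icc]]
    exact geom_sum_Ico hx1 (by omega)
  have hd0 : (d:ℝ) ≠ 0 := by positivity
  have h1u : (1:ℝ) - u ≠ 0 := by intro h; linarith
  have hsum2 : ∑ i ∈ Finset.Icc 1 d, (l/(l+u))^i = l * (1 - (l/(l+u))^d) / u := by
    rw [hsum, pow_succ, pow_one, div_eq_div_iff (sub_ne_zero.mpr hx1) hu.ne']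
    field_simp
    ring
  rw [hsum2]
  field_simp
  try exact Or.inl trivial
end

section
/- Fix an integer d ≥ 1, λ > 0, and an integer k ≥ 1. Let K_1, …, K_k be i.i.d. Exponential random variables with rate 1 and let W_1, …, W_k be i.i.d. random variables, independent of the K_i, each distributed as the uniform mixture (1/d)·∑_{i=1}^d Gamma(i,λ). Then for every u with 0 < u < 1, P( ∑_{i=1}^k W_i < ∑_{i=1}^k K_i ) ≤ [ (λ/(d·u·(1−u)))·(1 − (λ/(λ+u))^d) ]^k. -/
open MeasureTheory ProbabilityTheory Real Set
open scoped ENNReal NNReal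

section aux

lemma gammaPDF_mul_exp (a r t : ℝ) (ha : 0 < a) (hr : 0 < r) (ht : t < r) (x : ℝ) :
    gammaPDF a r x * ENNReal.ofReal (rexp (t * x))
      = ENNReal.ofReal ((r / (r - t)) ^ a) * gammaPDF a (r - t) x := by
  have hrt : (0:ℝ) < r - t := by linarith
  have hG : (0:ℝ) < Real.Gamma a := Real.Gamma_pos_of_pos ha
  rcases lt_or_ge x 0 with hx | hx
  · rw [gammaPDF_of_neg hx, gammaPDF_of_neg hx, zero_mul, mul_zero]
  · rw [gammaPDF_of_nonneg hx, gammaPDF_of_nonneg hx,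
      ← ENNReal.ofReal_mul (by positivity),
      ← ENNReal.ofReal_mul (rpow_nonneg (div_nonneg hr.le hrt.le) a)]
    congr 1
    have h1 : ((r - t):ℝ) ^ a ≠ 0 := (rpow_pos_of_pos hrt a).ne'
    have h2 : Real.Gamma a ≠ 0 := hG.ne'
    have hexp : rexp (-((r - t) * x)) = rexp (t * x) * rexp (-(r * x)) := by
      rw [← Real.exp_add]; ring_nf
    rw [Real.div_rpow hr.le hrt.le, hexp]
    field_simp

lemma gamma_lintegral_exp {a r t : ℝ} (ha : 0 < a) (hr : 0 < r) (ht : t < r) :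
    ∫⁻ x, ENNReal.ofReal (rexp (t * x)) ∂(gammaMeasure a r)
      = ENNReal.ofReal ((r / (r - t)) ^ a) := by
  have hpdf : Measurable (gammaPDF a r) := (measurable_gammaPDFReal a r).ennreal_ofReal
  rw [gammaMeasure, lintegral_withDensity_eq_lintegral_mul _ hpdf
    (by exact (measurable_const.mul measurable_id).exp.ennreal_ofReal)]
  calc ∫⁻ x, (gammaPDF a r * fun x => ENNReal.ofReal (rexp (t * x))) x
      = ∫⁻ x, ENNReal.ofReal ((r / (r - t)) ^ a) * gammaPDF a (r - t) x := by
        refine lintegral_congr fun x => ?_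
        simpa using gammaPDF_mul_exp a r t ha hr ht x
    _ = ENNReal.ofReal ((r / (r - t)) ^ a) * ∫⁻ x, gammaPDF a (r - t) x :=
        lintegral_const_mul _ (by exact (measurable_gammaPDFReal a (r - t)).ennreal_ofReal)
    _ = ENNReal.ofReal ((r / (r - t)) ^ a) := by
        rw [lintegral_gammaPDF_eq_one ha (by linarith), mul_one]

lemma gamma_integrable_exp {a r t : ℝ} (ha : 0 < a) (hr : 0 < r) (ht : t < r) :
    Integrable (fun x => rexp (t * x)) (gammaMeasure a r) := by
  refine ⟨(Real.continuous_exp.comp (continuous_const.mul continuous_id)).aestronglyMeasurable, ?_⟩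
  rw [hasFiniteIntegral_iff_norm]
  have : ∀ x : ℝ, ENNReal.ofReal ‖rexp (t * x)‖ = ENNReal.ofReal (rexp (t * x)) := by
    intro x; rw [norm_of_nonneg (Real.exp_pos _).le]
  simp_rw [this]
  rw [gamma_lintegral_exp ha hr ht]
  exact ENNReal.ofReal_lt_top

lemma gamma_integral_exp {a r t : ℝ} (ha : 0 < a) (hr : 0 < r) (ht : t < r) :
    ∫ x, rexp (t * x) ∂(gammaMeasure a r) = (r / (r - t)) ^ a := by
  have hm : AEStronglyMeasurable (fun x : ℝ => rexp (t * x)) (gammaMeasure a r) :=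
    (Real.continuous_exp.comp (continuous_const.mul continuous_id)).aestronglyMeasurable
  rw [integral_eq_lintegral_of_nonneg_ae (ae_of_all _ fun x => (Real.exp_pos _).le) hm,
    gamma_lintegral_exp ha hr ht,
    ENNReal.toReal_ofReal (rpow_nonneg (div_nonneg hr.le (by linarith)) a)]

end aux

/-- Let `K_1, …, K_k` be i.i.d. Exponential(1) random variables and let
`W_1, …, W_k` be i.i.d. random variables, independent of the `K_i`, each distributed as the
uniform mixture `(1/d)·∑_{i=1}^d Gamma(i,λ)`. Then for every `0 < u < 1`,
`P(∑ W_i < ∑ K_i) ≤ [(λ/(d·u·(1−u)))·(1 − (λ/(λ+u))^d)]^k`. -/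
theorem prob_sum_W_lt_sum_K_le
    {Ω : Type*} [MeasureSpace Ω] [IsProbabilityMeasure (ℙ : Measure Ω)]
    (d : ℕ) (hd : 1 ≤ d) (l : ℝ) (hl : 0 < l) (k : ℕ) (hk : 1 ≤ k)
    (K W : Fin k → Ω → ℝ)
    (hKmeas : ∀ i, Measurable (K i)) (hWmeas : ∀ i, Measurable (W i))
    (hindep : iIndepFun (Sum.elim K W) ℙ)
    (hKlaw : ∀ i, Measure.map (K i) ℙ = expMeasure 1)
    (hWlaw : ∀ i, Measure.map (W i) ℙ
      = (d : ℝ≥0∞)⁻¹ • (∑ j ∈ Finset.Icc 1 d, gammaMeasure (j : ℝ) l)) :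
    ∀ u : ℝ, 0 < u → u < 1 →
      (ℙ {ω | (∑ i, W i ω) < ∑ i, K i ω}).toReal
        ≤ ((l / (d * u * (1 - u))) * (1 - (l / (l + u)) ^ d)) ^ k := by
  intro u hu hu1
  have hlu : (0:ℝ) < l + u := by linarith
  have hdpos : (0:ℝ) < d := by exact_mod_cast hd
  -- the random variables `Y j`, `j : Fin k ⊕ Fin k`, are `K i` and `-W i`
  have hcont : ∀ t : ℝ, Continuous fun x : ℝ => rexp (t * x) := fun t =>
    Real.continuous_exp.comp (continuous_const.mul continuous_id)
  set Y : Fin k ⊕ Fin k → Ω → ℝ := Sum.elim K (fun i => -W i) with hY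
  have hYmeas : ∀ j, Measurable (Y j) := by
    rintro (i | i)
    · exact hKmeas i
    · exact (hWmeas i).neg
  have hYindep : iIndepFun Y ℙ := by
    have := hindep.comp (fun j => Sum.elim (fun _ : Fin k => (id : ℝ → ℝ))
      (fun _ : Fin k => (Neg.neg : ℝ → ℝ)) j)
      (by rintro (i | i) <;> [exact measurable_id; exact measurable_neg])
    convert this using 1
    funext j; cases j <;> rfl
  set S : Ω → ℝ := ∑ j, Y j with hS
  -- integrability of `exp (u * K i)` and `exp (u * (-W i))`
  have hKint : ∀ i, Integrable (fun ω => rexp (u * K i ω)) ℙ := by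
    intro i
    have h := gamma_integrable_exp (a := 1) (r := 1) (t := u) one_pos one_pos hu1
    have := (integrable_map_measure (f := K i) (g := fun x => rexp (u * x))
      ((hcont u).aestronglyMeasurable) (hKmeas i).aemeasurable).mp
      (by rw [hKlaw i]; exact h)
    exact this
  have hWgint : ∀ j ∈ Finset.Icc 1 d, Integrable (fun x => rexp (-u * x))
      (gammaMeasure (j : ℝ) l) := by
    intro j hj
    have hj1 : 1 ≤ j := (Finset.mem_Icc.mp hj).1
    exact gamma_integrable_exp (by exact_mod_cast hj1) hl (by linarith)
  have hWmixint : Integrable (fun x => rexp (-u * x))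
      ((d : ℝ≥0∞)⁻¹ • (∑ j ∈ Finset.Icc 1 d, gammaMeasure (j : ℝ) l)) := by
    refine Integrable.smul_measure ?_ (by simp; omega)
    exact integrable_finset_sum_measure.mpr hWgint
  have hWint : ∀ i, Integrable (fun ω => rexp (u * (-W i ω))) ℙ := by
    intro i
    simp_rw [mul_neg, ← neg_mul]
    have := (integrable_map_measure (f := W i) (g := fun x => rexp (-u * x))
      ((hcont (-u)).aestronglyMeasurable) (hWmeas i).aemeasurable).mp
      (by rw [hWlaw i]; exact hWmixint)
    exact this
  have hYint : ∀ j ∈ Finset.univ, Integrable (fun ω => rexp (u * Y j ω)) ℙ := by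
    rintro (i | i) -
    · exact hKint i
    · exact hWint i
  -- Chernoff bound
  have hSub : {ω | (∑ i, W i ω) < ∑ i, K i ω} ⊆ {ω | (0:ℝ) ≤ S ω} := by
    intro ω hω
    simp only [mem_setOf_eq] at hω ⊢
    have : S ω = ∑ i, K i ω + ∑ i, -W i ω := by
      simp [hS, hY, Finset.sum_apply, Fintype.sum_sum_type]
    rw [this]
    simp only [Finset.sum_neg_distrib]
    linarith
  have hSint : Integrable (fun ω => rexp (u * S ω)) ℙ := by
    have := hYindep.integrable_exp_mul_sum hYmeas hYint
    simpa [hS] using this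
  have chernoff : (ℙ {ω | (0:ℝ) ≤ S ω}).toReal ≤ mgf S ℙ u := by
    have := measure_ge_le_exp_mul_mgf (X := S) (μ := ℙ) (t := u) 0 hu.le hSint
    simp at this; exact this
  -- compute the mgf
  have hmgfK : ∀ i, mgf (K i) ℙ u = 1 / (1 - u) := by
    intro i
    have : mgf (K i) ℙ u = ∫ x, rexp (u * x) ∂(Measure.map (K i) ℙ) := by
      rw [mgf, integral_map (hKmeas i).aemeasurable ((hcont u).aestronglyMeasurable)]
    rw [this, hKlaw i, expMeasure, gamma_integral_exp one_pos one_pos hu1, rpow_one]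
  have hmgfW : ∀ i, mgf (-W i) ℙ u
      = (d:ℝ)⁻¹ * ((l / u) * (1 - (l / (l + u)) ^ d)) := by
    intro i
    have h1 : mgf (-W i) ℙ u = ∫ x, rexp (-u * x) ∂(Measure.map (W i) ℙ) := by
      rw [mgf_neg, mgf, integral_map (hWmeas i).aemeasurable
        ((hcont (-u)).aestronglyMeasurable)]
    rw [h1, hWlaw i, integral_smul_measure, integral_finset_sum_measure hWgint]
    have h2 : ∀ j ∈ Finset.Icc 1 d, ∫ x, rexp (-u * x) ∂(gammaMeasure (j:ℝ) l)
        = (l / (l + u)) ^ j := by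
      intro j hj
      have hj1 : 1 ≤ j := (Finset.mem_Icc.mp hj).1
      rw [gamma_integral_exp (by exact_mod_cast hj1) hl (by linarith), sub_neg_eq_add,
        rpow_natCast]
    rw [Finset.sum_congr rfl h2]
    have hgeom : ∑ j ∈ Finset.Icc 1 d, (l / (l + u)) ^ j
        = (l / u) * (1 - (l / (l + u)) ^ d) := by
      set r : ℝ := l / (l + u) with hr
      have hrlt : r < 1 := by
        rw [hr, div_lt_one hlu]; linarith
      have hrne : r ≠ 1 := ne_of_lt hrlt
      have : Finset.Icc 1 d = Finset.Ico 1 (d + 1) := by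
        rw [Finset.Ico_add_one_right_eq_Icc]
      rw [this, geom_sum_Ico hrne (by omega), pow_one]
      have h1r : (1:ℝ) - r = u / (l + u) := by
        rw [hr]; field_simp; ring
      have : r ^ (d+1) - r = -(r * (1 - r ^ d)) := by ring
      rw [this]
      rw [hr] at *
      have hu0 : u ≠ 0 := hu.ne'
      field_simp
      ring_nf
      field_simp
      ring
    rw [hgeom]
    simp [ENNReal.toReal_inv, smul_eq_mul]
  have hmgfS : mgf S ℙ u
      = ((1 / (1 - u)) * ((d:ℝ)⁻¹ * ((l / u) * (1 - (l / (l + u)) ^ d)))) ^ k := by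
    rw [hS, hYindep.mgf_sum hYmeas]
    rw [Fintype.prod_sum_type]
    have e1 : ∀ i : Fin k, mgf (Y (Sum.inl i)) ℙ u = 1 / (1 - u) := fun i => hmgfK i
    have e2 : ∀ i : Fin k, mgf (Y (Sum.inr i)) ℙ u
        = (d:ℝ)⁻¹ * ((l / u) * (1 - (l / (l + u)) ^ d)) := fun i => hmgfW i
    rw [Finset.prod_congr rfl (fun i _ => e1 i), Finset.prod_congr rfl (fun i _ => e2 i)]
    simp [mul_pow]
  -- put everything together
  have hbase : (1 / (1 - u)) * ((d:ℝ)⁻¹ * ((l / u) * (1 - (l / (l + u)) ^ d)))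
      = (l / (d * u * (1 - u))) * (1 - (l / (l + u)) ^ d) := by
    field_simp
  calc (ℙ {ω | (∑ i, W i ω) < ∑ i, K i ω}).toReal
      ≤ (ℙ {ω | (0:ℝ) ≤ S ω}).toReal := by
        apply ENNReal.toReal_mono (measure_ne_top _ _)
        exact measure_mono hSub
    _ ≤ mgf S ℙ u := chernoff
    _ = ((l / (d * u * (1 - u))) * (1 - (l / (l + u)) ^ d)) ^ k := by
        rw [hmgfS, hbase]
end

section
/- Fix an integer d ≥ 1 and define h_d : (0,∞) → ℝ by h_d(λ) := d − 2λ·[1 − (λ/(λ+1))^d]. Then there exists a unique λ > 0 such that h_d(λ) = 0. -/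
open Set Filter
open scoped Topology

lemma branch_key (d : ℕ) (l : ℝ) (hl : 0 < l) :
    2 * l * (1 - (l / (l + 1)) ^ d) =
      2 * ∑ k ∈ Finset.range d, (l / (l + 1)) ^ (k + 1) := by
  have h1 : l + 1 ≠ 0 := by positivity
  have geo := geom_sum_mul (l / (l + 1)) d
  have ht : l * (1 - l / (l + 1)) = l / (l + 1) := by field_simp; ring
  calc 2 * l * (1 - (l / (l + 1)) ^ d)
      = 2 * ((l / (l + 1)) * ∑ k ∈ Finset.range d, (l / (l + 1)) ^ k) := by
        linear_combination (2 * l) * geo +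
          (2 * ∑ k ∈ Finset.range d, (l / (l + 1)) ^ k) * ht
    _ = 2 * ∑ k ∈ Finset.range d, (l / (l + 1)) ^ (k + 1) := by
        rw [Finset.mul_sum]
        congr 1
        refine Finset.sum_congr rfl fun k _ => ?_
        rw [pow_succ]
        ring

lemma branch_mono (d : ℕ) (hd : 1 ≤ d) :
    StrictMonoOn (fun l : ℝ => ∑ k ∈ Finset.range d, (l / (l + 1)) ^ (k + 1))
      (Set.Ioi 0) := by
  intro a ha b hb hab
  have ha' : (0:ℝ) < a := ha
  have hb' : (0:ℝ) < b := hb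
  have ht : a / (a + 1) < b / (b + 1) := by
    rw [div_lt_div_iff₀ (by linarith) (by linarith)]
    nlinarith
  have hta : 0 ≤ a / (a + 1) := by positivity
  apply Finset.sum_lt_sum_of_nonempty
  · exact Finset.nonempty_range_iff.mpr (by omega)
  · intro k _
    exact pow_lt_pow_left₀ ht hta (Nat.succ_ne_zero k)

/-- For fixed `d ≥ 1`, the function
`h_d(λ) := d − 2λ·[1 − (λ/(λ+1))^d]` has a unique positive root. -/
theorem exists_unique_branch_root (d : ℕ) (hd : 1 ≤ d) :
    ∃! l : ℝ, 0 < l ∧ (d : ℝ) - 2 * l * (1 - (l / (l + 1)) ^ d) = 0 := by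
  have hd1 : (1:ℝ) ≤ d := by exact_mod_cast hd
  set H : ℝ → ℝ := fun l => (d : ℝ) - 2 * l * (1 - (l / (l + 1)) ^ d) with hH_def
  -- continuity
  have hcont : ContinuousOn H (Icc (1/4 : ℝ) (2 * d)) := by
    apply ContinuousOn.sub continuousOn_const
    apply ContinuousOn.mul (continuousOn_const.mul continuousOn_id)
    apply ContinuousOn.sub continuousOn_const
    apply ContinuousOn.pow
    refine ContinuousOn.div continuousOn_id
      (continuousOn_id.add continuousOn_const) (fun x hx => ?_)
    have := hx.1
    norm_num at this ⊢
    linarith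
  have hab : (1/4 : ℝ) ≤ 2 * d := by linarith
  -- H (1/4) ≥ 0
  have hHa : 0 ≤ H (1/4) := by
    have h5 : ((1:ℝ)/4) / ((1:ℝ)/4 + 1) = 1/5 := by norm_num
    have hp : (0:ℝ) ≤ ((1:ℝ)/5) ^ d := by positivity
    have hp1 : ((1:ℝ)/5) ^ d ≤ 1 := pow_le_one₀ (by norm_num) (by norm_num)
    simp only [hH_def, h5]
    nlinarith
  -- H (2d) ≤ 0
  have hHb : H (2 * d) ≤ 0 := by
    have hb0 : (0:ℝ) < 2 * d := by linarith
    have hkey := branch_key d (2 * d) hb0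
    set t : ℝ := (2 * d) / (2 * d + 1) with ht_def
    have ht0 : 0 ≤ t := by positivity
    have ht1 : t ≤ 1 := by
      rw [div_le_one (by linarith)]; linarith
    have htd : (1:ℝ)/2 < t ^ d := by
      have hber := one_add_mul_le_pow (a := -(1 / (2 * (d:ℝ) + 1))) (by
        have h2 : (1:ℝ) / (2 * (d:ℝ) + 1) ≤ 1 := by
          rw [div_le_one (by linarith)]; linarith
        linarith) d
      have heq : (1 + -(1 / (2 * (d:ℝ) + 1))) = t := by
        rw [ht_def]; field_simp; ring
      rw [heq] at hber
      have : (d:ℝ) * (1 / (2 * (d:ℝ) + 1)) < 1/2 := by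
        rw [mul_one_div, div_lt_div_iff₀ (by linarith) (by norm_num)]
        linarith
      nlinarith
    have hsum : (d : ℝ) * t ^ d ≤ ∑ k ∈ Finset.range d, t ^ (k + 1) := by
      have := Finset.card_nsmul_le_sum (Finset.range d) (fun k => t ^ (k + 1))
        (t ^ d) (fun k hk => by
          apply pow_le_pow_of_le_one ht0 ht1
          have := Finset.mem_range.mp hk
          omega)
      simpa [nsmul_eq_mul] using this
    simp only [hH_def]
    rw [hkey]
    nlinarith
  -- existence via IVT
  obtain ⟨l, hlmem, hl0⟩ := intermediate_value_Icc' hab hcont ⟨hHb, hHa⟩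
  have hlpos : (0:ℝ) < l := by
    have := hlmem.1; linarith
  refine ⟨l, ⟨hlpos, hl0⟩, ?_⟩
  rintro y ⟨hy, hyH⟩
  -- uniqueness via strict monotonicity
  have e1 := branch_key d y hy
  have e2 := branch_key d l hlpos
  have hsum_eq : (fun l : ℝ => ∑ k ∈ Finset.range d, (l / (l + 1)) ^ (k + 1)) y
      = (fun l : ℝ => ∑ k ∈ Finset.range d, (l / (l + 1)) ^ (k + 1)) l := by
    simp only [hH_def] at hl0
    simp only []
    nlinarith [e1, e2, hyH, hl0]
  exact (branch_mono d hd).injOn hy hlpos hsum_eq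
end

section
/- For each integer d ≥ 1 define f_d(λ) := inf_{0 < u < 1} (λ/(u(1−u)))·[1 − (λ/(λ+u))^d], and let λ_c : ℕ → ℝ be a sequence such that for every d ≥ 1, λ_c(d) ∈ (0,1) and f_d(λ_c(d)) = 1. Then λ_c(d) → 1/4 as d → ∞. -/
open Set Filter
open scoped Topology

/-- `f_d(λ) = inf_{0<u<1} (λ/(u(1-u)))·[1 − (λ/(λ+u))^d]`. -/
noncomputable def f (d : ℕ) (l : ℝ) : ℝ :=
  ⨅ u : Set.Ioo (0 : ℝ) 1, (l / (u * (1 - (u : ℝ)))) * (1 - (l / (l + u)) ^ d)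

lemma term_nonneg (d : ℕ) (l : ℝ) (hl : 0 < l) (u : Set.Ioo (0:ℝ) 1) :
    0 ≤ (l / ((u : ℝ) * (1 - (u : ℝ)))) * (1 - (l / (l + (u : ℝ))) ^ d) := by
  obtain ⟨u, hu0, hu1⟩ := u
  simp only
  have h1 : 0 < u * (1 - u) := by nlinarith
  have h2 : l / (l + u) < 1 := by
    rw [div_lt_one (by linarith)]; linarith
  have h3 : 0 ≤ l / (l + u) := by positivity
  have h4 : (l / (l + u)) ^ d ≤ 1 := pow_le_one₀ h3 h2.le
  have h5 : 0 ≤ l / (u * (1 - u)) := by positivity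
  nlinarith

lemma f_bddBelow (d : ℕ) (l : ℝ) (hl : 0 < l) :
    BddBelow (Set.range fun u : Set.Ioo (0:ℝ) 1 =>
      (l / ((u : ℝ) * (1 - (u : ℝ)))) * (1 - (l / (l + (u : ℝ))) ^ d)) := by
  refine ⟨0, ?_⟩
  rintro x ⟨u, rfl⟩
  exact term_nonneg d l hl u

lemma f_le_point (d : ℕ) (l : ℝ) (hl : 0 < l) (u : Set.Ioo (0:ℝ) 1) :
    f d l ≤ (l / ((u : ℝ) * (1 - (u : ℝ)))) * (1 - (l / (l + (u : ℝ))) ^ d) :=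
  ciInf_le (f_bddBelow d l hl) u

lemma le_f (d : ℕ) (l : ℝ) (c : ℝ)
    (h : ∀ u : Set.Ioo (0:ℝ) 1,
      c ≤ (l / ((u : ℝ) * (1 - (u : ℝ)))) * (1 - (l / (l + (u : ℝ))) ^ d)) :
    c ≤ f d l := by
  haveI : Nonempty (Set.Ioo (0:ℝ) 1) := ⟨⟨1/2, by norm_num⟩⟩
  exact le_ciInf h

lemma quarter_le (d : ℕ) (l : ℝ) (hl0 : 0 < l) (hf : f d l = 1) : 1/4 ≤ l := by
  have h := f_le_point d l hl0 ⟨1/2, by norm_num⟩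
  rw [hf] at h
  have h3 : 0 ≤ (l / (l + 1/2)) ^ d := by positivity
  have h2 : (l / ((1:ℝ)/2 * (1 - 1/2))) = 4 * l := by ring
  rw [h2] at h
  nlinarith

lemma key_bound (d : ℕ) (hd : 3 ≤ d) (l : ℝ) (hl0 : 0 < l) (hl1 : l < 1)
    (u : ℝ) (hu0 : 0 < u) (hu1 : u < 1) :
    min ((6:ℝ)/5) (4 * l * (1 - (2/3 : ℝ)^d)) ≤
      (l / (u * (1 - u))) * (1 - (l / (l + u)) ^ d) := by
  have hdd : (3:ℝ) ≤ (d:ℝ) := by exact_mod_cast hd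
  have hlu : 0 < l + u := by linarith
  have huu : 0 < u * (1 - u) := by nlinarith
  rcases le_or_gt u (l/2) with hcase | hcase
  · -- region 1 : u ≤ l/2
    refine le_trans (min_le_left _ _) ?_
    have hldu : 0 < l + (d:ℝ) * u := by positivity
    -- Bernoulli
    have hb : 1 + (d:ℝ) * (u / l) ≤ (1 + u / l) ^ d := by
      have hul : (0:ℝ) ≤ u / l := by positivity
      have := one_add_mul_le_pow (a := u / l) (by linarith : (-2:ℝ) ≤ u / l) d
      linarith
    have hr : (l / (l + u)) ^ d ≤ l / (l + (d:ℝ) * u) := by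
      rw [div_pow, div_le_div_iff₀ (by positivity) hldu]
      have hexp : (l + u) ^ d = l ^ d * (1 + u / l) ^ d := by
        rw [← mul_pow]
        congr 1
        field_simp
      rw [hexp]
      have hpow : (0:ℝ) < l ^ d := by positivity
      have h1 : l ^ d * (1 + (d:ℝ) * (u / l)) ≤ l ^ d * (1 + u / l) ^ d :=
        mul_le_mul_of_nonneg_left hb hpow.le
      have h2 : l ^ d * (l + (d:ℝ) * u) = l * (l ^ d * (1 + (d:ℝ) * (u / l))) := by
        field_simp
      rw [h2]
      exact mul_le_mul_of_nonneg_left h1 hl0.le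
    have hstep : (l / (u * (1 - u))) * ((d:ℝ) * u / (l + (d:ℝ) * u)) ≤
        (l / (u * (1 - u))) * (1 - (l / (l + u)) ^ d) := by
      apply mul_le_mul_of_nonneg_left _ (by positivity)
      have : (d:ℝ) * u / (l + (d:ℝ) * u) = 1 - l / (l + (d:ℝ) * u) := by
        field_simp
        ring
      rw [this]
      linarith
    refine le_trans ?_ hstep
    rw [div_mul_div_comm, le_div_iff₀ (by positivity)]
    -- 6/5 * (u*(1-u) * (l + d*u)) ≤ l * (d*u)
    have h1 : u * (1 - u) ≤ u := by nlinarith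
    have h2 : l + (d:ℝ) * u ≤ l + (d:ℝ) * (l/2) := by
      have : (0:ℝ) ≤ (d:ℝ) := by positivity
      nlinarith
    nlinarith [mul_le_mul h1 h2 hldu.le hu0.le, mul_pos hu0 hl0,
      mul_nonneg (mul_nonneg hu0.le hl0.le) (by linarith : (0:ℝ) ≤ (d:ℝ) - 3)]
  · -- region 2 : l/2 < u
    refine le_trans (min_le_right _ _) ?_
    have hr : l / (l + u) ≤ 2/3 := by
      rw [div_le_iff₀ hlu]; linarith
    have hp : (l / (l + u)) ^ d ≤ (2/3 : ℝ) ^ d :=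
      pow_le_pow_left₀ (by positivity) hr d
    have hp1 : (2/3 : ℝ) ^ d ≤ 1 := pow_le_one₀ (by norm_num) (by norm_num)
    have h4 : 4 * l ≤ l / (u * (1 - u)) := by
      rw [le_div_iff₀ huu]
      nlinarith [sq_nonneg (u - 1/2)]
    exact mul_le_mul h4 (by linarith) (by linarith) (by positivity)

/-- If `λ_c : ℕ → ℝ` satisfies `λ_c(d) ∈ (0,1)` and `f_d(λ_c(d)) = 1`
for every `d ≥ 1`, then `λ_c(d) → 1/4` as `d → ∞`. -/
theorem critical_tendsto_one_fourth
    (lc : ℕ → ℝ)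
    (hc : ∀ d : ℕ, 1 ≤ d → lc d ∈ Set.Ioo (0 : ℝ) 1 ∧ f d (lc d) = 1) :
    Tendsto lc atTop (𝓝 (1 / 4)) := by
  rw [Metric.tendsto_atTop]
  intro ε hε
  set δ := ε / 2 with hδdef
  have hδ : 0 < δ := by positivity
  have hq : (0:ℝ) < 4 * δ / (1 + 4 * δ) := by positivity
  have htd : Tendsto (fun d : ℕ => (2/3 : ℝ) ^ d) atTop (𝓝 0) :=
    tendsto_pow_atTop_nhds_zero_of_lt_one (by norm_num) (by norm_num)
  have hev : ∀ᶠ d : ℕ in atTop, (2/3 : ℝ) ^ d < 4 * δ / (1 + 4 * δ) :=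
    htd.eventually_lt_const hq
  obtain ⟨N1, hN1⟩ := hev.exists_forall_of_atTop
  refine ⟨max N1 3, fun n hn => ?_⟩
  have hn1 : N1 ≤ n := le_trans (le_max_left _ _) hn
  have hn3 : 3 ≤ n := le_trans (le_max_right _ _) hn
  obtain ⟨⟨hl0, hl1⟩, hfeq⟩ := hc n (by omega)
  set l := lc n with hl
  have hlow : 1/4 ≤ l := quarter_le n l hl0 hfeq
  have hupp : l < 1/4 + δ := by
    by_contra hcon
    push_neg at hcon
    have hp : (2/3 : ℝ) ^ n < 4 * δ / (1 + 4 * δ) := hN1 n hn1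
    have hp1 : (2/3 : ℝ) ^ n < 1 := by
      have : 4 * δ / (1 + 4 * δ) < 1 := by
        rw [div_lt_one (by positivity)]; linarith
      linarith
    have hmin : 1 < min ((6:ℝ)/5) (4 * l * (1 - (2/3 : ℝ)^n)) := by
      apply lt_min (by norm_num)
      have h1 : (1 + 4 * δ) * (1 - (2/3:ℝ)^n) < 4 * l * (1 - (2/3:ℝ)^n) ∨
          (1 + 4 * δ) * (1 - (2/3:ℝ)^n) ≤ 4 * l * (1 - (2/3:ℝ)^n) := by
        right
        apply mul_le_mul_of_nonneg_right (by linarith) (by linarith)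
      have h2 : 1 < (1 + 4 * δ) * (1 - (2/3:ℝ)^n) := by
        have := (lt_div_iff₀ (by positivity : (0:ℝ) < 1 + 4 * δ)).mp hp
        nlinarith
      rcases h1 with h | h <;> linarith
    have hge : min ((6:ℝ)/5) (4 * l * (1 - (2/3 : ℝ)^n)) ≤ f n l := by
      apply le_f
      rintro ⟨u, hu0, hu1⟩
      exact key_bound n hn3 l hl0 hl1 u hu0 hu1
    rw [hfeq] at hge
    linarith
  rw [Real.dist_eq, abs_of_nonneg (by linarith)]
  rw [hδdef] at hupp
  linarith
end
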